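/- Let J satisfy condition (J) and let {J_n} be a nondecreasing approximating sequence as above with minimizers ν_n of η_n(ν) = ∫ J_n(x)e^{-νx}dx + cν, ν_n → ν₀, and suppose η(ν) = ∫ J(x)e^{-νx}dx + cν. Then inf_{ν ∈ ℝ} η(ν) = η(ν₀), i.e. the infimum for J is attained at the limit of the minimizers for J_n, and η_n(ν_n) → η(ν₀). -/

import Mathlib

open MeasureTheory Real Filter Set

/-- with `Jₙ ↑ J` as before, minimizers `νₙ` of
`ηₙ(ν) = ∫ Jₙ e^{-νx} dx + cν` converging to `ν₀`, the infimum of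
`η(ν) = ∫ J e^{-νx} dx + cν` is attained at `ν₀` (in particular `J e^{-ν₀ ·}` is
integrable, and `η(ν₀) ≤ η(μ)` for every `μ` at which the integral is finite), and
`ηₙ(νₙ) → η(ν₀)`. -/
theorem stmt18 (J : ℝ → ℝ) (hJcont : Continuous J) (hJbdd : ∃ C, ∀ x, J x ≤ C)
    (hJnonneg : ∀ x, 0 ≤ J x) (hJ0 : 0 < J 0) (hJL1 : Integrable J)
    (hJint : ∫ x, J x = 1) (c : ℝ)
    (Jn : ℕ → ℝ → ℝ)
    (hJncont : ∀ n, Continuous (Jn n)) (hJnsupp : ∀ n, HasCompactSupport (Jn n))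
    (hJnnonneg : ∀ n x, 0 ≤ Jn n x) (hJn0 : ∀ n, 0 < Jn n 0)
    (hJnmono : ∀ n x, Jn n x ≤ Jn (n+1) x) (hJnle : ∀ n x, Jn n x ≤ J x)
    (hJnlim : TendstoLocallyUniformly (fun n => Jn n) J Filter.atTop)
    (ν : ℕ → ℝ)
    (hmin : ∀ n, ∀ μ : ℝ,
      (∫ x, Jn n x * Real.exp (-(ν n) * x)) + c * ν n
        ≤ (∫ x, Jn n x * Real.exp (-μ * x)) + c * μ)
    (ν₀ : ℝ) (hνlim : Filter.Tendsto ν Filter.atTop (nhds ν₀)) :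
    Integrable (fun x => J x * Real.exp (-ν₀ * x)) ∧
    (∀ μ : ℝ, Integrable (fun x => J x * Real.exp (-μ * x)) →
      (∫ x, J x * Real.exp (-ν₀ * x)) + c * ν₀
        ≤ (∫ x, J x * Real.exp (-μ * x)) + c * μ) ∧
    Filter.Tendsto (fun n => (∫ x, Jn n x * Real.exp (-(ν n) * x)) + c * ν n)
      Filter.atTop (nhds ((∫ x, J x * Real.exp (-ν₀ * x)) + c * ν₀)) := by
  -- basic continuity / integrability facts
  have hfn_cont : ∀ (n : ℕ) (μ : ℝ), Continuous (fun x => Jn n x * Real.exp (-μ * x)) := by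
    intro n μ
    exact (hJncont n).mul (Real.continuous_exp.comp (by continuity))
  have hfn_int : ∀ (n : ℕ) (μ : ℝ), Integrable (fun x => Jn n x * Real.exp (-μ * x)) := by
    intro n μ
    exact (hfn_cont n μ).integrable_of_hasCompactSupport ((hJnsupp n).mul_right)
  have hfn_nonneg : ∀ (n : ℕ) (μ : ℝ) (x : ℝ), 0 ≤ Jn n x * Real.exp (-μ * x) :=
    fun n μ x => mul_nonneg (hJnnonneg n x) (Real.exp_pos _).le
  have hf_cont : Continuous (fun x => J x * Real.exp (-ν₀ * x)) :=
    hJcont.mul (Real.continuous_exp.comp (by continuity))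
  have hf_nonneg : ∀ x, 0 ≤ J x * Real.exp (-ν₀ * x) :=
    fun x => mul_nonneg (hJnonneg x) (Real.exp_pos _).le
  have hJn_int : ∀ n, Integrable (Jn n) :=
    fun n => (hJncont n).integrable_of_hasCompactSupport (hJnsupp n)
  set t : ℕ → ℝ := fun n => ∫ x, Jn n x * Real.exp (-(ν n) * x) with ht
  -- bound `t n ≤ 1 - c * ν n`, from minimality at `μ = 0` and `∫ Jn ≤ ∫ J = 1`
  have htle : ∀ n, t n ≤ 1 - c * ν n := by
    intro n
    have h0 := hmin n 0
    simp only [neg_zero, zero_mul, Real.exp_zero, mul_one, mul_zero, add_zero] at h0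
    have h1 : (∫ x, Jn n x) ≤ ∫ x, J x :=
      integral_mono (hJn_int n) hJL1 (hJnle n)
    have h2 : (∫ x, Jn n x) ≤ 1 := by rw [← hJint]; exact h1
    have := h0.trans h2
    linarith
  -- pointwise convergence
  have hptw : ∀ x : ℝ, Tendsto (fun n => Jn n x * Real.exp (-(ν n) * x)) atTop
      (nhds (J x * Real.exp (-ν₀ * x))) := by
    intro x
    have h1 : Tendsto (fun n => Jn n x) atTop (nhds (J x)) :=
      (hJnlim.tendstoLocallyUniformlyOn (s := Set.univ)).tendsto_at (Set.mem_univ x)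
    have h2 : Tendsto (fun n => Real.exp (-(ν n) * x)) atTop (nhds (Real.exp (-ν₀ * x))) :=
      (Real.continuous_exp.tendsto _).comp (hνlim.neg.mul_const x)
    exact h1.mul h2
  have hptwE : ∀ x : ℝ, Tendsto (fun n => ENNReal.ofReal (Jn n x * Real.exp (-(ν n) * x))) atTop
      (nhds (ENNReal.ofReal (J x * Real.exp (-ν₀ * x)))) :=
    fun x => (ENNReal.continuous_ofReal.tendsto _).comp (hptw x)
  -- Fatou
  have hmeas : ∀ n, Measurable (fun x => ENNReal.ofReal (Jn n x * Real.exp (-(ν n) * x))) :=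
    fun n => ENNReal.measurable_ofReal.comp (hfn_cont n (ν n)).measurable
  have hlint : ∀ n, (∫⁻ x, ENNReal.ofReal (Jn n x * Real.exp (-(ν n) * x)))
      = ENNReal.ofReal (t n) :=
    fun n => (ofReal_integral_eq_lintegral_ofReal (hfn_int n (ν n))
      (Eventually.of_forall (hfn_nonneg n (ν n)))).symm
  have hFatou : (∫⁻ x, ENNReal.ofReal (J x * Real.exp (-ν₀ * x)))
      ≤ liminf (fun n => ENNReal.ofReal (t n)) atTop := by
    have h1 : (∫⁻ x, ENNReal.ofReal (J x * Real.exp (-ν₀ * x)))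
        = ∫⁻ x, liminf (fun n => ENNReal.ofReal (Jn n x * Real.exp (-(ν n) * x))) atTop :=
      lintegral_congr fun x => ((hptwE x).liminf_eq).symm
    calc (∫⁻ x, ENNReal.ofReal (J x * Real.exp (-ν₀ * x)))
        = _ := h1
      _ ≤ liminf (fun n => ∫⁻ x, ENNReal.ofReal (Jn n x * Real.exp (-(ν n) * x))) atTop :=
          lintegral_liminf_le hmeas
      _ = liminf (fun n => ENNReal.ofReal (t n)) atTop := by simp only [hlint]
  -- integrability of the limit
  have hliminf_le : liminf (fun n => ENNReal.ofReal (t n)) atTop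
      ≤ ENNReal.ofReal (1 - c * ν₀) := by
    have hbt : Tendsto (fun n => ENNReal.ofReal (1 - c * ν n)) atTop
        (nhds (ENNReal.ofReal (1 - c * ν₀))) :=
      (ENNReal.continuous_ofReal.tendsto _).comp (tendsto_const_nhds.sub (hνlim.const_mul c))
    calc liminf (fun n => ENNReal.ofReal (t n)) atTop
        ≤ liminf (fun n => ENNReal.ofReal (1 - c * ν n)) atTop :=
          liminf_le_liminf (Eventually.of_forall fun n => ENNReal.ofReal_le_ofReal (htle n))
      _ = _ := hbt.liminf_eq
  have hint_f : Integrable (fun x => J x * Real.exp (-ν₀ * x)) := by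
    refine ⟨hf_cont.aestronglyMeasurable, ?_⟩
    rw [hasFiniteIntegral_iff_ofReal (Eventually.of_forall hf_nonneg)]
    exact lt_of_le_of_lt (hFatou.trans hliminf_le) ENNReal.ofReal_lt_top
  set T : ℝ := ∫ x, J x * Real.exp (-ν₀ * x) with hT
  have hTnn : 0 ≤ T := integral_nonneg hf_nonneg
  have htnn : ∀ n, 0 ≤ t n := fun n => integral_nonneg (hfn_nonneg n (ν n))
  have hofT : ENNReal.ofReal T = ∫⁻ x, ENNReal.ofReal (J x * Real.exp (-ν₀ * x)) :=
    ofReal_integral_eq_lintegral_ofReal hint_f (Eventually.of_forall hf_nonneg)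
  -- upper bound: `t n ≤ T + (c * ν₀ - c * ν n)`
  have htub : ∀ n, t n ≤ T + (c * ν₀ - c * ν n) := by
    intro n
    have h0 := hmin n ν₀
    have h1 : (∫ x, Jn n x * Real.exp (-ν₀ * x)) ≤ T :=
      integral_mono (hfn_int n ν₀) hint_f
        (fun x => mul_le_mul_of_nonneg_right (hJnle n x) (Real.exp_pos _).le)
    have : t n + c * ν n ≤ T + c * ν₀ := h0.trans (by linarith)
    linarith
  -- squeeze in ℝ≥0∞
  have hbT : Tendsto (fun n => ENNReal.ofReal (T + (c * ν₀ - c * ν n))) atTop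
      (nhds (ENNReal.ofReal T)) := by
    have h1 : Tendsto (fun n => T + (c * ν₀ - c * ν n)) atTop (nhds T) := by
      have := tendsto_const_nhds (x := T) (f := atTop (α := ℕ)) |>.add
        ((tendsto_const_nhds (x := c * ν₀)).sub (hνlim.const_mul c))
      simpa using this
    exact (ENNReal.continuous_ofReal.tendsto _).comp h1
  have hlimsup : limsup (fun n => ENNReal.ofReal (t n)) atTop ≤ ENNReal.ofReal T := by
    calc limsup (fun n => ENNReal.ofReal (t n)) atTop
        ≤ limsup (fun n => ENNReal.ofReal (T + (c * ν₀ - c * ν n))) atTop :=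
          limsup_le_limsup (Eventually.of_forall fun n => ENNReal.ofReal_le_ofReal (htub n))
      _ = _ := hbT.limsup_eq
  have hliminf : ENNReal.ofReal T ≤ liminf (fun n => ENNReal.ofReal (t n)) atTop := by
    rw [hofT]; exact hFatou
  have hinfsup : liminf (fun n => ENNReal.ofReal (t n)) atTop = ENNReal.ofReal T :=
    le_antisymm (le_trans liminf_le_limsup hlimsup) hliminf
  have hsupeq : limsup (fun n => ENNReal.ofReal (t n)) atTop = ENNReal.ofReal T :=
    le_antisymm hlimsup (hliminf.trans liminf_le_limsup)
  have huE : Tendsto (fun n => ENNReal.ofReal (t n)) atTop (nhds (ENNReal.ofReal T)) :=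
    tendsto_of_liminf_eq_limsup hinfsup hsupeq
  have htT : Tendsto t atTop (nhds T) := by
    have h := (ENNReal.tendsto_toReal (ENNReal.ofReal_ne_top)).comp huE
    have h2 : (fun n => (ENNReal.ofReal (t n)).toReal) = t :=
      funext fun n => ENNReal.toReal_ofReal (htnn n)
    rwa [Function.comp_def, h2, ENNReal.toReal_ofReal hTnn] at h
  refine ⟨hint_f, ?_, ?_⟩
  · intro μ hμ
    have hlim : Tendsto (fun n => t n + c * ν n) atTop (nhds (T + c * ν₀)) :=
      htT.add (hνlim.const_mul c)
    refine le_of_tendsto hlim (Eventually.of_forall fun n => ?_)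
    refine (hmin n μ).trans (add_le_add_left ?_ _)
    exact integral_mono (hfn_int n μ) hμ
      (fun x => mul_le_mul_of_nonneg_right (hJnle n x) (Real.exp_pos _).le)
  · exact htT.add (hνlim.const_mul c)
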